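/- A multiversion schedule s is conflict-serializable if and only if its serialization graph SeG(s) is acyclic, where SeG(s) has the transactions as nodes and an edge from T_i to T_j whenever some operation of T_j depends on some operation of T_i in s. -/

import Mathlib

namespace MVCC

/-! Common formalization of multiversion schedules, dependencies,
conflict/view serializability, isolation levels and robustness. -/

inductive Action : Type
  | init | read | write | commit
deriving DecidableEq

/-- The ambient "environment": each operation belongs to a transaction,
has an action kind and an object; there is a special initial operation `op0`,
and each transaction has a designated commit operation and first operation. -/
structure Env (Obj Tr Opn : Type) where
  tr : Opn → Tr
  act : Opn → Action
  obj : Opn → Obj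
  op0 : Opn
  op0_act : act op0 = Action.init
  commitOf : Tr → Opn
  commit_tr : ∀ t, tr (commitOf t) = t
  commit_act : ∀ t, act (commitOf t) = Action.commit
  firstOf : Tr → Opn
  first_tr : ∀ t, tr (firstOf t) = t

variable {Obj Tr Opn : Type}

/-- Operations present in a schedule over the set of transactions `T'`. -/
def Env.opsOver (E : Env Obj Tr Opn) (T' : Set Tr) : Set Opn :=
  {a | a = E.op0 ∨ E.tr a ∈ T'}

def Env.isRead (E : Env Obj Tr Opn) (a : Opn) : Prop := E.act a = Action.read
def Env.isWrite (E : Env Obj Tr Opn) (a : Opn) : Prop := E.act a = Action.write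

/-- A transaction is read-only if it contains no write operations. -/
def Env.readOnly (E : Env Obj Tr Opn) (t : Tr) : Prop := ∀ a, E.tr a = t → ¬ E.isWrite a

/-- A multiversion schedule over the transactions `T'`:
an operation order `lt` (`<_s`), a version order `vlt` (`<<_s`)
and a version function `vf` (`v_s`). -/
structure Schedule (E : Env Obj Tr Opn) (T' : Set Tr) where
  lt : Opn → Opn → Prop
  vlt : Opn → Opn → Prop
  vf : Opn → Opn
  lt_trans : ∀ a b c, lt a b → lt b c → lt a c
  lt_irrefl : ∀ a, ¬ lt a a
  lt_total : ∀ a ∈ E.opsOver T', ∀ b ∈ E.opsOver T', a ≠ b → lt a b ∨ lt b a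
  op0_first : ∀ a ∈ E.opsOver T', a ≠ E.op0 → lt E.op0 a
  first_first : ∀ a ∈ E.opsOver T', a ≠ E.op0 → a ≠ E.firstOf (E.tr a) →
    lt (E.firstOf (E.tr a)) a
  commit_last : ∀ a ∈ E.opsOver T', a ≠ E.op0 → a ≠ E.commitOf (E.tr a) →
    lt a (E.commitOf (E.tr a))
  vlt_trans : ∀ a b c, vlt a b → vlt b c → vlt a c
  vlt_irrefl : ∀ a, ¬ vlt a a
  vlt_total : ∀ a ∈ E.opsOver T', ∀ b ∈ E.opsOver T', E.isWrite a → E.isWrite b →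
    E.obj a = E.obj b → a ≠ b → vlt a b ∨ vlt b a
  vlt_op0_first : ∀ a ∈ E.opsOver T', E.isWrite a → a ≠ E.op0 → vlt E.op0 a
  vf_read : ∀ a ∈ E.opsOver T', E.isRead a →
    vf a = E.op0 ∨ (vf a ∈ E.opsOver T' ∧ E.isWrite (vf a) ∧ E.obj (vf a) = E.obj a)
  vf_lt : ∀ a ∈ E.opsOver T', E.isRead a → lt (vf a) a

namespace Schedule

variable {E : Env Obj Tr Opn} {T' : Set Tr}

/-- ww-dependency: both writes on the same object, `b <<_s a`. -/
def wwDep (s : Schedule E T') (b a : Opn) : Prop :=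
  b ∈ E.opsOver T' ∧ a ∈ E.opsOver T' ∧ E.tr b ≠ E.tr a ∧ E.obj b = E.obj a ∧
    E.isWrite b ∧ E.isWrite a ∧ s.vlt b a

/-- wr-dependency: `b` write, `a` read, `b = v_s(a)` or `b <<_s v_s(a)`. -/
def wrDep (s : Schedule E T') (b a : Opn) : Prop :=
  b ∈ E.opsOver T' ∧ a ∈ E.opsOver T' ∧ E.tr b ≠ E.tr a ∧ E.obj b = E.obj a ∧
    E.isWrite b ∧ E.isRead a ∧ (b = s.vf a ∨ s.vlt b (s.vf a))

/-- rw-antidependency: `b` read, `a` write, `v_s(b) <<_s a`. -/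
def rwDep (s : Schedule E T') (b a : Opn) : Prop :=
  b ∈ E.opsOver T' ∧ a ∈ E.opsOver T' ∧ E.tr b ≠ E.tr a ∧ E.obj b = E.obj a ∧
    E.isRead b ∧ E.isWrite a ∧ s.vlt (s.vf b) a

/-- `a` depends on `b` in `s`. -/
def dep (s : Schedule E T') (b a : Opn) : Prop :=
  s.wwDep b a ∨ s.wrDep b a ∨ s.rwDep b a

/-- Conflict-equivalence: identical dependencies. -/
def confEquiv (s s' : Schedule E T') : Prop := ∀ b a, s.dep b a ↔ s'.dep b a

/-- `a` installs the last (`<<_s`-maximal) version of its object in `s`. -/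
def lastWrite (s : Schedule E T') (a : Opn) : Prop :=
  a ∈ E.opsOver T' ∧ E.isWrite a ∧
    ¬ ∃ c ∈ E.opsOver T', E.isWrite c ∧ E.obj c = E.obj a ∧ s.vlt a c

/-- View-equivalence: same version function on reads and the same
last installed version per object. -/
def viewEquiv (s s' : Schedule E T') : Prop :=
  (∀ a ∈ E.opsOver T', E.isRead a → s.vf a = s'.vf a) ∧
  (∀ a, s.lastWrite a ↔ s'.lastWrite a)

/-- Single-version schedule: the version order agrees with the operation order
on writes to the same object and every read reads the most recent write. -/
def singleVersion (s : Schedule E T') : Prop :=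
  (∀ a ∈ E.opsOver T', ∀ b ∈ E.opsOver T', E.isWrite a → E.isWrite b →
    E.obj a = E.obj b → (s.vlt a b ↔ s.lt a b)) ∧
  (∀ a ∈ E.opsOver T', E.isRead a →
    ¬ ∃ c ∈ E.opsOver T', E.isWrite c ∧ E.obj c = E.obj a ∧ s.lt (s.vf a) c ∧ s.lt c a)

/-- Serial schedule: transactions are not interleaved. -/
def serial (s : Schedule E T') : Prop :=
  ∀ a b c, a ∈ E.opsOver T' → b ∈ E.opsOver T' → c ∈ E.opsOver T' →
    a ≠ E.op0 → b ≠ E.op0 → c ≠ E.op0 →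
    s.lt a b → s.lt b c → E.tr a = E.tr c → E.tr b = E.tr a

def conflictSerializable (s : Schedule E T') : Prop :=
  ∃ s' : Schedule E T', s'.singleVersion ∧ s'.serial ∧ s.confEquiv s'

def viewSerializable (s : Schedule E T') : Prop :=
  ∃ s' : Schedule E T', s'.singleVersion ∧ s'.serial ∧ s.viewEquiv s'

/-- Edge of the serialization graph. -/
def sgEdge (s : Schedule E T') (ti tj : Tr) : Prop :=
  ∃ b a, s.dep b a ∧ E.tr b = ti ∧ E.tr a = tj

/-- Acyclicity of the serialization graph. -/
def sgAcyclic (s : Schedule E T') : Prop :=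
  ∀ t : Tr, ¬ Relation.TransGen s.sgEdge t t

/-- Transaction `ti` occurs (entirely) before transaction `tj` in `s`. -/
def transBefore (s : Schedule E T') (ti tj : Tr) : Prop :=
  ∀ p ∈ E.opsOver T', ∀ q ∈ E.opsOver T', p ≠ E.op0 → q ≠ E.op0 →
    E.tr p = ti → E.tr q = tj → s.lt p q

/-- Write operation `a` respects the commit order of `s`. -/
def respectsCommitOrder (s : Schedule E T') (a : Opn) : Prop :=
  ∀ b ∈ E.opsOver T', E.isWrite b → E.obj b = E.obj a → E.tr b ≠ E.tr a →
    (s.vlt a b ↔ s.lt (E.commitOf (E.tr a)) (E.commitOf (E.tr b)))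

/-- Read operation `b` is read-last-committed in `s` relative to operation `rel`. -/
def readLastCommitted (s : Schedule E T') (b rel : Opn) : Prop :=
  (s.vf b = E.op0 ∨ s.lt (E.commitOf (E.tr (s.vf b))) rel) ∧
  ¬ ∃ c ∈ E.opsOver T', E.isWrite c ∧ E.obj c = E.obj b ∧
      s.lt (E.commitOf (E.tr c)) rel ∧ s.vlt (s.vf b) c

/-- Transaction `t` exhibits a dirty write in `s`. -/
def dirtyWrite (s : Schedule E T') (t : Tr) : Prop :=
  ∃ b ∈ E.opsOver T', ∃ a ∈ E.opsOver T', E.isWrite b ∧ E.isWrite a ∧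
    E.obj b = E.obj a ∧ E.tr a = t ∧ E.tr b ≠ t ∧
    s.lt b a ∧ s.lt a (E.commitOf (E.tr b))

/-- Transaction `t` exhibits a concurrent write in `s`. -/
def concurrentWrite (s : Schedule E T') (t : Tr) : Prop :=
  ∃ b ∈ E.opsOver T', ∃ a ∈ E.opsOver T', E.isWrite b ∧ E.isWrite a ∧
    E.obj b = E.obj a ∧ E.tr a = t ∧ E.tr b ≠ t ∧
    s.lt b a ∧ s.lt (E.firstOf t) (E.commitOf (E.tr b))

/-- Two transactions are concurrent: each starts before the other commits. -/
def concurrent (s : Schedule E T') (ti tj : Tr) : Prop :=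
  s.lt (E.firstOf ti) (E.commitOf tj) ∧ s.lt (E.firstOf tj) (E.commitOf ti)

/-- Transaction `t` is allowed under Read Committed in `s`. -/
def allowedRC (s : Schedule E T') (t : Tr) : Prop :=
  (∀ a ∈ E.opsOver T', E.tr a = t → a ≠ E.op0 → E.isWrite a → s.respectsCommitOrder a) ∧
  (∀ a ∈ E.opsOver T', E.tr a = t → E.isRead a → s.readLastCommitted a a) ∧
  ¬ s.dirtyWrite t

/-- Transaction `t` is allowed under Snapshot Isolation in `s`. -/
def allowedSI (s : Schedule E T') (t : Tr) : Prop :=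
  (∀ a ∈ E.opsOver T', E.tr a = t → a ≠ E.op0 → E.isWrite a → s.respectsCommitOrder a) ∧
  (∀ a ∈ E.opsOver T', E.tr a = t → E.isRead a → s.readLastCommitted a (E.firstOf t)) ∧
  ¬ s.concurrentWrite t

/-- There is a rw-antidependency from (an operation of) `ti` to `tj`. -/
def rwEdge (s : Schedule E T') (ti tj : Tr) : Prop :=
  ∃ b a, s.rwDep b a ∧ E.tr b = ti ∧ E.tr a = tj

/-- Dangerous structure `t1 → t2 → t3`. -/
def dangerous (s : Schedule E T') (t1 t2 t3 : Tr) : Prop :=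
  s.rwEdge t1 t2 ∧ s.rwEdge t2 t3 ∧ s.concurrent t1 t2 ∧ s.concurrent t2 t3 ∧
  s.lt (E.commitOf t3) (E.commitOf t1) ∧ s.lt (E.commitOf t3) (E.commitOf t2) ∧
  (E.readOnly t1 → s.lt (E.commitOf t3) (E.firstOf t1))

end Schedule

inductive IsoLevel : Type
  | RC | SI | SSI
deriving DecidableEq

/-- A schedule is allowed under the `{RC,SI,SSI}`-allocation `f`. -/
def allowedUnder {E : Env Obj Tr Opn} {T' : Set Tr} (f : Tr → IsoLevel)
    (s : Schedule E T') : Prop :=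
  (∀ t ∈ T', f t = IsoLevel.RC → s.allowedRC t) ∧
  (∀ t ∈ T', f t ≠ IsoLevel.RC → s.allowedSI t) ∧
  ¬ ∃ t1 ∈ T', ∃ t2 ∈ T', ∃ t3 ∈ T', f t1 = IsoLevel.SSI ∧ f t2 = IsoLevel.SSI ∧
      f t3 = IsoLevel.SSI ∧ s.dangerous t1 t2 t3

/-- An (abstract) allocation: for each subset of transactions,
a set of allowed schedules over that subset. -/
def Allocation (E : Env Obj Tr Opn) : Type _ :=
  (T' : Set Tr) → Schedule E T' → Prop

/-- Conflict-robustness: every allowed schedule over every subset of `T`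
is conflict-serializable. -/
def conflictRobust (E : Env Obj Tr Opn) (T : Set Tr) (A : Allocation E) : Prop :=
  ∀ T' : Set Tr, T' ⊆ T → ∀ s : Schedule E T', A T' s → s.conflictSerializable

/-- View-robustness: every allowed schedule over every subset of `T`
is view-serializable. -/
def viewRobust (E : Env Obj Tr Opn) (T : Set Tr) (A : Allocation E) : Prop :=
  ∀ T' : Set Tr, T' ⊆ T → ∀ s : Schedule E T', A T' s → s.viewSerializable

/-- `s` is a generalized split schedule over the transactions `σ 0, …, σ (n-1)`
(cyclically ordered) with split operation `b1` of transaction `σ 0`. -/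
def isGenSplitWith {E : Env Obj Tr Opn} {T' : Set Tr} (s : Schedule E T')
    (n : ℕ) (σ : ZMod n → Tr) (b1 : Opn) : Prop :=
  2 ≤ n ∧ Function.Injective σ ∧ Set.range σ = T' ∧
  b1 ∈ E.opsOver T' ∧ b1 ≠ E.op0 ∧ E.tr b1 = σ 0 ∧
  -- shape: prefix(T1, b1) comes before all operations of T2 … Tn
  (∀ a ∈ E.opsOver T', a ≠ E.op0 → E.tr a = σ 0 → (a = b1 ∨ s.lt a b1) →
    ∀ c ∈ E.opsOver T', c ≠ E.op0 → E.tr c ≠ σ 0 → s.lt a c) ∧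
  -- shape: postfix(T1, b1) comes after all operations of T2 … Tn
  (∀ a ∈ E.opsOver T', a ≠ E.op0 → E.tr a = σ 0 → s.lt b1 a →
    ∀ c ∈ E.opsOver T', c ≠ E.op0 → E.tr c ≠ σ 0 → s.lt c a) ∧
  -- shape: T2 … Tn occur serially, in order
  (∀ i j : ZMod n, i ≠ 0 → j ≠ 0 → i.val < j.val →
    ∀ a ∈ E.opsOver T', ∀ c ∈ E.opsOver T', a ≠ E.op0 → c ≠ E.op0 →
      E.tr a = σ i → E.tr c = σ j → s.lt a c) ∧
  -- (1) there is a cyclic chain of dependencies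
  (∀ i : ZMod n, ∃ b a, s.dep b a ∧ E.tr b = σ i ∧ E.tr a = σ (i + 1)) ∧
  -- (2) the cycle is minimal: all dependencies are between consecutive pairs
  (∀ b a, s.dep b a → ∃ i : ZMod n, E.tr b = σ i ∧ E.tr a = σ (i + 1)) ∧
  -- (3) write operations respect the commit order
  (∀ a ∈ E.opsOver T', a ≠ E.op0 → E.isWrite a → s.respectsCommitOrder a)

/-- `s` is a generalized split schedule. -/
def isGenSplit {E : Env Obj Tr Opn} {T' : Set Tr} (s : Schedule E T') : Prop :=
  ∃ (n : ℕ) (σ : ZMod n → Tr) (b1 : Opn), isGenSplitWith s n σ b1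



section Stmt2Aux

variable {Obj Tr Opn : Type} {E : Env Obj Tr Opn} {T' : Set Tr}

private lemma act_write_ne_op0 {a : Opn} (h : E.isWrite a) : a ≠ E.op0 := by
  intro heq
  rw [heq] at h
  rw [Env.isWrite, E.op0_act] at h
  exact Action.noConfusion h

private lemma act_read_ne_op0 {a : Opn} (h : E.isRead a) : a ≠ E.op0 := by
  intro heq
  rw [heq] at h
  rw [Env.isRead, E.op0_act] at h
  exact Action.noConfusion h

/-- Basic facts extracted from a dependency. -/
private lemma dep_elim {s : Schedule E T'} {b a : Opn} (h : s.dep b a) :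
    b ∈ E.opsOver T' ∧ a ∈ E.opsOver T' ∧ E.tr b ≠ E.tr a ∧ E.obj b = E.obj a ∧
      b ≠ E.op0 ∧ a ≠ E.op0 := by
  rcases h with ⟨h1, h2, h3, h4, h5, h6, _⟩ | ⟨h1, h2, h3, h4, h5, h6, _⟩ |
    ⟨h1, h2, h3, h4, h5, h6, _⟩
  · exact ⟨h1, h2, h3, h4, act_write_ne_op0 h5, act_write_ne_op0 h6⟩
  · exact ⟨h1, h2, h3, h4, act_write_ne_op0 h5, act_read_ne_op0 h6⟩
  · exact ⟨h1, h2, h3, h4, act_read_ne_op0 h5, act_write_ne_op0 h6⟩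

/-- In a serial single-version schedule, dependencies go forward in time. -/
private lemma dep_lt_of_sv_serial {s : Schedule E T'} (hsv : s.singleVersion)
    {b a : Opn} (h : s.dep b a) : s.lt b a := by
  obtain ⟨hb, ha, htr, hobj, hb0, ha0⟩ := dep_elim h
  rcases h with ⟨_, _, _, _, hwb, hwa, hv⟩ | ⟨_, _, _, _, hwb, hra, hv⟩ |
    ⟨_, _, _, _, hrb, hwa, hv⟩
  · exact (hsv.1 b hb a ha hwb hwa hobj).1 hv
  · -- wr-dependency
    rcases hv with rfl | hv
    · exact s.vf_lt a ha hra
    · rcases s.vf_read a ha hra with h0 | ⟨hm, hw, ho⟩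
      · rw [h0] at hv
        exact absurd (s.vlt_trans _ _ _ hv (s.vlt_op0_first b hb hwb hb0))
          (s.vlt_irrefl b)
      · have : s.lt b (s.vf a) :=
          (hsv.1 b hb (s.vf a) hm hwb hw (hobj.trans ho.symm)).1 hv
        exact s.lt_trans _ _ _ this (s.vf_lt a ha hra)
  · -- rw-antidependency
    have hba : b ≠ a := fun he => htr (he ▸ rfl)
    rcases s.lt_total b hb a ha hba with hlt | hlt
    · exact hlt
    · exfalso
      have hva : s.lt (s.vf b) a := by
        rcases s.vf_read b hb hrb with h0 | ⟨hm, hw, ho⟩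
        · rw [h0]; exact s.op0_first a ha ha0
        · exact (hsv.1 (s.vf b) hm a ha hw hwa (ho.trans hobj)).1 hv
      exact hsv.2 b hb hrb ⟨a, ha, hwa, hobj.symm, hva, hlt⟩

/-- In a serial schedule, one crossing pair of operations forces all pairs. -/
private lemma serial_all_before {s : Schedule E T'} (hser : s.serial)
    {b a : Opn} (hb : b ∈ E.opsOver T') (ha : a ∈ E.opsOver T')
    (hb0 : b ≠ E.op0) (ha0 : a ≠ E.op0) (htr : E.tr b ≠ E.tr a) (hlt : s.lt b a)
    {p q : Opn} (hp : p ∈ E.opsOver T') (hq : q ∈ E.opsOver T')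
    (hp0 : p ≠ E.op0) (hq0 : q ≠ E.op0)
    (hpt : E.tr p = E.tr b) (hqt : E.tr q = E.tr a) : s.lt p q := by
  by_contra hnpq
  have hpq : p ≠ q := by
    intro he; rw [he, hqt] at hpt; exact htr hpt.symm
  have hqp : s.lt q p := (s.lt_total p hp q hq hpq).resolve_left hnpq
  have hpa : p ≠ a := by intro he; rw [he] at hpt; exact htr hpt.symm
  rcases s.lt_total p hp a ha hpa with h1 | h1
  · -- q < p < a, tr q = tr a  ⇒  tr p = tr q
    have := hser q p a hq hp ha hq0 hp0 ha0 hqp h1 hqt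
    rw [hpt, hqt] at this
    exact htr this
  · -- b < a < p, tr b = tr p  ⇒  tr a = tr b
    have := hser b a p hb ha hp hb0 ha0 hp0 hlt h1 hpt.symm
    rw [this] at htr
    exact htr rfl

/-- Forward direction: conflict-serializable implies acyclic. -/
private lemma sg_acyclic_of_cs {s : Schedule E T'} (h : s.conflictSerializable) :
    s.sgAcyclic := by
  obtain ⟨s', hsv, hser, hequiv⟩ := h
  intro t hcyc
  -- edges of s are edges of s'
  set Q : Tr → Tr → Prop := fun ti tj =>
    (∃ p ∈ E.opsOver T', p ≠ E.op0 ∧ E.tr p = ti) ∧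
    (∃ q ∈ E.opsOver T', q ≠ E.op0 ∧ E.tr q = tj) ∧
    s'.transBefore ti tj with hQ
  have hQtrans : Transitive Q := by
    rintro ti tj tk ⟨hpi, ⟨q, hq, hq0, hqt⟩, h1⟩ ⟨_, hrk, h2⟩
    refine ⟨hpi, hrk, ?_⟩
    intro p hp q' hq' hp0 hq'0 hpt hq't
    exact s'.lt_trans _ _ _ (h1 p hp q hq hp0 hq0 hpt hqt)
      (h2 q hq q' hq' hq0 hq'0 hqt hq't)
  have hsub : ∀ ti tj, s.sgEdge ti tj → Q ti tj := by
    rintro ti tj ⟨b, a, hdep, rfl, rfl⟩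
    have hdep' : s'.dep b a := (hequiv b a).1 hdep
    obtain ⟨hb, ha, htr, _, hb0, ha0⟩ := dep_elim hdep'
    have hlt : s'.lt b a := dep_lt_of_sv_serial hsv hdep'
    exact ⟨⟨b, hb, hb0, rfl⟩, ⟨a, ha, ha0, rfl⟩,
      fun p hp q hq hp0 hq0 hpt hqt =>
        serial_all_before hser hb ha hb0 ha0 htr hlt hp hq hp0 hq0 hpt hqt⟩
  have hQ' : Q t t := by
    have := Relation.TransGen.mono hsub t t hcyc
    haveI hQinst : IsTrans Tr Q := ⟨fun _ _ _ h1 h2 => hQtrans h1 h2⟩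
    rwa [Relation.transGen_eq_self] at this
  obtain ⟨⟨p, hp, hp0, hpt⟩, _, hbef⟩ := hQ'
  exact s'.lt_irrefl p (hbef p hp p hp hp0 hp0 hpt hpt)

/-- Maximum of a finite set for a transitive relation, total on the set. -/
private lemma exists_max_finset {α : Type*} [DecidableEq α] (r : α → α → Prop)
    (htr : Transitive r) :
    ∀ S : Finset α, (∀ a ∈ S, ∀ b ∈ S, a ≠ b → r a b ∨ r b a) → S.Nonempty →
      ∃ m ∈ S, ∀ c ∈ S, c ≠ m → r c m := by
  intro S
  induction S using Finset.induction_on with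
  | empty => intro _ h; exact absurd h (by simp)
  | @insert a S' ha ih =>
    intro htot _
    rcases S'.eq_empty_or_nonempty with rfl | hS'
    · exact ⟨a, by simp, by simp⟩
    · obtain ⟨m, hmS, hmax⟩ := ih (fun x hx y hy =>
        htot x (Finset.mem_insert_of_mem hx) y (Finset.mem_insert_of_mem hy)) hS'
      have ham : a ≠ m := fun h => ha (h ▸ hmS)
      rcases htot a (Finset.mem_insert_self _ _) m
          (Finset.mem_insert_of_mem hmS) ham with h1 | h1
      · refine ⟨m, Finset.mem_insert_of_mem hmS, ?_⟩
        intro c hc hcm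
        rcases Finset.mem_insert.1 hc with rfl | hc'
        · exact h1
        · exact hmax c hc' hcm
      · refine ⟨a, Finset.mem_insert_self _ _, ?_⟩
        intro c hc hca
        rcases Finset.mem_insert.1 hc with rfl | hc'
        · exact absurd rfl hca
        · by_cases hcm : c = m
          · exact hcm ▸ h1
          · exact htr (hmax c hc' hcm) h1

private lemma exists_max_set {α : Type*} (r : α → α → Prop) (htr : Transitive r)
    (S : Set α) (hfin : S.Finite)
    (htot : ∀ a ∈ S, ∀ b ∈ S, a ≠ b → r a b ∨ r b a) (hne : S.Nonempty) :
    ∃ m ∈ S, ∀ c ∈ S, c ≠ m → r c m := by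
  classical
  obtain ⟨m, hm, hmax⟩ := exists_max_finset r htr hfin.toFinset
    (fun a hx b hy => htot a (hfin.mem_toFinset.1 hx) b (hfin.mem_toFinset.1 hy))
    (by obtain ⟨x, hx⟩ := hne; exact ⟨x, hfin.mem_toFinset.2 hx⟩)
  exact ⟨m, hfin.mem_toFinset.1 hm, fun c hc => hmax c (hfin.mem_toFinset.2 hc)⟩

/-- The operation order of the serialized schedule. -/
private def nLt (s : Schedule E T') (L : Tr → Tr → Prop) (x y : Opn) : Prop :=
  x ∈ E.opsOver T' ∧ y ∈ E.opsOver T' ∧ x ≠ y ∧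
    (x = E.op0 ∨ (y ≠ E.op0 ∧ (L (E.tr x) (E.tr y) ∨ (E.tr x = E.tr y ∧ s.lt x y))))

/-- The version order of the serialized schedule. -/
private def nVlt (s : Schedule E T') (L : Tr → Tr → Prop) (x y : Opn) : Prop :=
  E.isWrite y ∧ nLt s L x y ∧ (x = E.op0 ∨ (E.isWrite x ∧ E.obj x = E.obj y))

/-- The candidate versions for a read in the serialized schedule. -/
private def nW (s : Schedule E T') (L : Tr → Tr → Prop) (a : Opn) : Set Opn :=
  {c | c ∈ E.opsOver T' ∧ E.isWrite c ∧ E.obj c = E.obj a ∧ nLt s L c a}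

open Classical in
/-- The version function of the serialized schedule. -/
private noncomputable def nVf (s : Schedule E T') (L : Tr → Tr → Prop) (a : Opn) : Opn :=
  if h : ∃ m ∈ nW s L a, ∀ c ∈ nW s L a, c ≠ m → nLt s L c m then h.choose else E.op0

section WithL

variable (s : Schedule E T') (L : Tr → Tr → Prop)
variable (Ltr : Transitive L) (Lirr : ∀ t, ¬ L t t)
  (Ltot : ∀ t u, t ≠ u → L t u ∨ L u t)

private lemma nLt_irrefl : ∀ x, ¬ nLt s L x x := fun _ h => h.2.2.1 rfl

include Ltr Lirr in
private lemma nLt_trans : ∀ x y z, nLt s L x y → nLt s L y z → nLt s L x z := by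
  rintro x y z ⟨hx, hy, hxy, hcase1⟩ ⟨-, hz, hyz, hcase2⟩
  rcases hcase1 with rfl | ⟨hy0, hcase1⟩
  · refine ⟨hx, hz, ?_, Or.inl rfl⟩
    rintro rfl
    rcases hcase2 with h | ⟨hz0, _⟩
    · exact hxy h.symm
    · exact hz0 rfl
  · rcases hcase2 with rfl | ⟨hz0, hcase2⟩
    · exact absurd rfl hy0
    · have hxz : x ≠ z := by
        rintro rfl
        rcases hcase1 with hL1 | ⟨he1, hs1⟩ <;> rcases hcase2 with hL2 | ⟨he2, hs2⟩
        · exact Lirr _ (Ltr hL1 hL2)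
        · exact Lirr _ (by rw [he2] at hL1; exact hL1)
        · exact Lirr _ (by rw [← he1] at hL2; exact hL2)
        · exact s.lt_irrefl x (s.lt_trans _ _ _ hs1 hs2)
      refine ⟨hx, hz, hxz, Or.inr ⟨hz0, ?_⟩⟩
      rcases hcase1 with hL1 | ⟨he1, hs1⟩ <;> rcases hcase2 with hL2 | ⟨he2, hs2⟩
      · exact Or.inl (Ltr hL1 hL2)
      · exact Or.inl (by rw [← he2]; exact hL1)
      · exact Or.inl (by rw [he1]; exact hL2)
      · exact Or.inr ⟨he1.trans he2, s.lt_trans _ _ _ hs1 hs2⟩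

include Ltot in
private lemma nLt_total : ∀ x ∈ E.opsOver T', ∀ y ∈ E.opsOver T', x ≠ y →
    nLt s L x y ∨ nLt s L y x := by
  intro x hx y hy hxy
  by_cases hx0 : x = E.op0
  · exact Or.inl ⟨hx, hy, hxy, Or.inl hx0⟩
  by_cases hy0 : y = E.op0
  · exact Or.inr ⟨hy, hx, hxy.symm, Or.inl hy0⟩
  by_cases htr : E.tr x = E.tr y
  · rcases s.lt_total x hx y hy hxy with h | h
    · exact Or.inl ⟨hx, hy, hxy, Or.inr ⟨hy0, Or.inr ⟨htr, h⟩⟩⟩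
    · exact Or.inr ⟨hy, hx, hxy.symm, Or.inr ⟨hx0, Or.inr ⟨htr.symm, h⟩⟩⟩
  · rcases Ltot _ _ htr with h | h
    · exact Or.inl ⟨hx, hy, hxy, Or.inr ⟨hy0, Or.inl h⟩⟩
    · exact Or.inr ⟨hy, hx, hxy.symm, Or.inr ⟨hx0, Or.inl h⟩⟩

private lemma nLt_op0_first : ∀ a ∈ E.opsOver T', a ≠ E.op0 → nLt s L E.op0 a :=
  fun a ha ha0 => ⟨Or.inl rfl, ha, fun h => ha0 h.symm, Or.inl rfl⟩

private lemma nLt_cases {x y : Opn} (h : nLt s L x y) (hx0 : x ≠ E.op0) :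
    L (E.tr x) (E.tr y) ∨ (E.tr x = E.tr y ∧ s.lt x y) := by
  rcases h.2.2.2 with h' | ⟨_, h'⟩
  · exact absurd h' hx0
  · exact h'

include Ltr Lirr in
private lemma nVlt_trans : ∀ x y z, nVlt s L x y → nVlt s L y z → nVlt s L x z := by
  rintro x y z ⟨hwy, hxy, hc1⟩ ⟨hwz, hyz, hc2⟩
  refine ⟨hwz, nLt_trans s L Ltr Lirr x y z hxy hyz, ?_⟩
  rcases hc2 with h0 | ⟨_, hoyz⟩
  · exact absurd h0 (act_write_ne_op0 hwy)
  · rcases hc1 with h0 | ⟨hwx, hoxy⟩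
    · exact Or.inl h0
    · exact Or.inr ⟨hwx, hoxy.trans hoyz⟩

private lemma nVlt_irrefl : ∀ x, ¬ nVlt s L x x := fun x h => nLt_irrefl s L x h.2.1

include Ltot in
private lemma nVlt_total : ∀ x ∈ E.opsOver T', ∀ y ∈ E.opsOver T', E.isWrite x →
    E.isWrite y → E.obj x = E.obj y → x ≠ y → nVlt s L x y ∨ nVlt s L y x := by
  intro x hx y hy hwx hwy ho hxy
  rcases nLt_total s L Ltot x hx y hy hxy with h | h
  · exact Or.inl ⟨hwy, h, Or.inr ⟨hwx, ho⟩⟩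
  · exact Or.inr ⟨hwx, h, Or.inr ⟨hwy, ho.symm⟩⟩

private lemma nVlt_op0_first :
    ∀ a ∈ E.opsOver T', E.isWrite a → a ≠ E.op0 → nVlt s L E.op0 a :=
  fun a ha hw ha0 => ⟨hw, nLt_op0_first s L a ha ha0, Or.inl rfl⟩

include Ltr Lirr Ltot in
private lemma nVf_spec [Finite Opn] {a : Opn} (hne : (nW s L a).Nonempty) :
    nVf s L a ∈ nW s L a ∧ ∀ c ∈ nW s L a, c ≠ nVf s L a → nLt s L c (nVf s L a) := by
  classical
  have hex : ∃ m ∈ nW s L a, ∀ c ∈ nW s L a, c ≠ m → nLt s L c m := by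
    refine exists_max_set (nLt s L) (fun x y z hxy hyz => nLt_trans s L Ltr Lirr x y z hxy hyz)
      (nW s L a) (Set.toFinite _) ?_ hne
    intro x hx y hy hxy
    exact nLt_total s L Ltot x hx.1 y hy.1 hxy
  rw [nVf, dif_pos hex]
  exact ⟨hex.choose_spec.1, hex.choose_spec.2⟩

private lemma nVf_empty {a : Opn} (hne : ¬ (nW s L a).Nonempty) : nVf s L a = E.op0 := by
  rw [nVf, dif_neg]
  rintro ⟨m, hm, -⟩
  exact hne ⟨m, hm⟩

include Ltr Lirr Ltot in
private lemma nVf_lt [Finite Opn] {a : Opn} (ha : a ∈ E.opsOver T') (ha0 : a ≠ E.op0) :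
    nLt s L (nVf s L a) a := by
  by_cases hne : (nW s L a).Nonempty
  · exact (nVf_spec s L Ltr Lirr Ltot hne).1.2.2.2
  · rw [nVf_empty s L hne]
    exact nLt_op0_first s L a ha ha0

include Ltr Lirr Ltot in
private lemma build [Finite Opn] (Lsg : ∀ t u, s.sgEdge t u → L t u) :
    s.conflictSerializable := by
  refine ⟨⟨nLt s L, nVlt s L, nVf s L,
    (fun x y z hxy hyz => nLt_trans s L Ltr Lirr x y z hxy hyz),
    nLt_irrefl s L,
    nLt_total s L Ltot,
    nLt_op0_first s L,
    ?_, ?_,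
    (fun x y z hxy hyz => nVlt_trans s L Ltr Lirr x y z hxy hyz),
    nVlt_irrefl s L,
    nVlt_total s L Ltot,
    nVlt_op0_first s L,
    ?_, ?_⟩, ?_, ?_, ?_⟩
  · -- first_first
    intro a ha ha0 haf
    by_cases hf0 : E.firstOf (E.tr a) = E.op0
    · rw [hf0]; exact nLt_op0_first s L a ha ha0
    · have htrf : E.tr (E.firstOf (E.tr a)) = E.tr a := E.first_tr _
      have hmem : E.firstOf (E.tr a) ∈ E.opsOver T' := by
        rcases ha with h | h
        · exact absurd h ha0
        · exact Or.inr (by rw [htrf]; exact h)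
      exact ⟨hmem, ha, fun h => haf h.symm,
        Or.inr ⟨ha0, Or.inr ⟨htrf, s.first_first a ha ha0 haf⟩⟩⟩
  · -- commit_last
    intro a ha ha0 hac
    have hc0 : E.commitOf (E.tr a) ≠ E.op0 := by
      intro h
      have h1 := E.commit_act (E.tr a)
      rw [h, E.op0_act] at h1
      exact Action.noConfusion h1
    have htrc : E.tr (E.commitOf (E.tr a)) = E.tr a := E.commit_tr _
    have hmem : E.commitOf (E.tr a) ∈ E.opsOver T' := by
      rcases ha with h | h
      · exact absurd h ha0
      · exact Or.inr (by rw [htrc]; exact h)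
    exact ⟨ha, hmem, hac, Or.inr ⟨hc0, Or.inr ⟨htrc.symm, s.commit_last a ha ha0 hac⟩⟩⟩
  · -- vf_read
    intro a ha _
    by_cases hne : (nW s L a).Nonempty
    · obtain ⟨⟨hm, hw, ho, _⟩, _⟩ := nVf_spec s L Ltr Lirr Ltot hne
      exact Or.inr ⟨hm, hw, ho⟩
    · exact Or.inl (nVf_empty s L hne)
  · -- vf_lt
    intro a ha hr
    exact nVf_lt s L Ltr Lirr Ltot ha (act_read_ne_op0 hr)
  · -- singleVersion
    constructor
    · intro a _ b _ hwa hwb ho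
      exact ⟨fun h => h.2.1, fun h => ⟨hwb, h, Or.inr ⟨hwa, ho⟩⟩⟩
    · rintro a ha hr ⟨c, hc, hwc, hoc, h1, h2⟩
      have hcW : c ∈ nW s L a := ⟨hc, hwc, hoc, h2⟩
      obtain ⟨hmem, hmax⟩ := nVf_spec s L Ltr Lirr Ltot ⟨c, hcW⟩
      by_cases hcm : c = nVf s L a
      · rw [hcm] at h1; exact nLt_irrefl s L _ h1
      · exact nLt_irrefl s L _ (nLt_trans s L Ltr Lirr _ _ _ h1 (hmax c hcW hcm))
  · -- serial
    intro a b c _ _ _ ha0 hb0 _ hab hbc hac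
    rcases nLt_cases s L hab ha0 with h1 | ⟨h1, _⟩
    · rcases nLt_cases s L hbc hb0 with h2 | ⟨h2, _⟩
      · rw [← hac] at h2
        exact absurd (Ltr h1 h2) (Lirr _)
      · rw [h2]; exact hac.symm
    · exact h1.symm
  · -- confEquiv
    intro b a
    constructor
    · intro hdep
      obtain ⟨hb, ha, htr, hobj, hb0, ha0⟩ := dep_elim hdep
      have hL : L (E.tr b) (E.tr a) := Lsg _ _ ⟨b, a, hdep, rfl, rfl⟩
      have hba : b ≠ a := fun h => htr (h ▸ rfl)
      have hlt : nLt s L b a := ⟨hb, ha, hba, Or.inr ⟨ha0, Or.inl hL⟩⟩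
      rcases hdep with ⟨_, _, _, _, hwb, hwa, _⟩ | ⟨_, _, _, _, hwb, hra, _⟩ |
        ⟨_, _, _, _, hrb, hwa, _⟩
      · exact Or.inl ⟨hb, ha, htr, hobj, hwb, hwa, hwa, hlt, Or.inr ⟨hwb, hobj⟩⟩
      · have hbW : b ∈ nW s L a := ⟨hb, hwb, hobj, hlt⟩
        obtain ⟨⟨hvm, hvw, hvo, _⟩, hmax⟩ := nVf_spec s L Ltr Lirr Ltot ⟨b, hbW⟩
        refine Or.inr (Or.inl ⟨hb, ha, htr, hobj, hwb, hra, ?_⟩)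
        by_cases hbv : b = nVf s L a
        · exact Or.inl hbv
        · exact Or.inr ⟨hvw, hmax b hbW hbv, Or.inr ⟨hwb, hobj.trans hvo.symm⟩⟩
      · refine Or.inr (Or.inr ⟨hb, ha, htr, hobj, hrb, hwa, ?_⟩)
        show nVlt s L (nVf s L b) a
        by_cases hne : (nW s L b).Nonempty
        · obtain ⟨⟨hvm, hvw, hvo, hvlt⟩, _⟩ := nVf_spec s L Ltr Lirr Ltot hne
          exact ⟨hwa, nLt_trans s L Ltr Lirr _ _ _ hvlt hlt, Or.inr ⟨hvw, hvo.trans hobj⟩⟩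
        · rw [nVf_empty s L hne]
          exact ⟨hwa, nLt_op0_first s L a ha ha0, Or.inl rfl⟩
    · intro hdep
      obtain ⟨hb, ha, htr, hobj, hb0, ha0⟩ := dep_elim hdep
      have hba : b ≠ a := fun h => htr (h ▸ rfl)
      rcases hdep with ⟨_, _, _, _, hwb, hwa, hv⟩ | ⟨_, _, _, _, hwb, hra, hv⟩ |
        ⟨_, _, _, _, hrb, hwa, hv⟩
      · -- ww in the serialized schedule
        have hv' : nVlt s L b a := hv
        have hL : L (E.tr b) (E.tr a) :=
          (nLt_cases s L hv'.2.1 hb0).resolve_right (fun h => htr h.1)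
        rcases s.vlt_total b hb a ha hwb hwa hobj hba with h | h
        · exact Or.inl ⟨hb, ha, htr, hobj, hwb, hwa, h⟩
        · exact absurd (Lsg _ _ ⟨a, b,
            Or.inl ⟨ha, hb, fun he => htr he.symm, hobj.symm, hwa, hwb, h⟩, rfl, rfl⟩)
            (fun hL' => Lirr _ (Ltr hL hL'))
      · -- wr in the serialized schedule
        have hvfa_lt : nLt s L (nVf s L a) a := nVf_lt s L Ltr Lirr Ltot ha ha0
        have hv' : b = nVf s L a ∨ nVlt s L b (nVf s L a) := hv
        have hlt : nLt s L b a := by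
          rcases hv' with rfl | hv'
          · exact hvfa_lt
          · exact nLt_trans s L Ltr Lirr _ _ _ hv'.2.1 hvfa_lt
        have hL : L (E.tr b) (E.tr a) :=
          (nLt_cases s L hlt hb0).resolve_right (fun h => htr h.1)
        rcases s.vf_read a ha hra with h0 | ⟨hm, hw, ho⟩
        · exact absurd (Lsg _ _ ⟨a, b, Or.inr (Or.inr ⟨ha, hb, fun he => htr he.symm,
            hobj.symm, hra, hwb, by rw [h0]; exact s.vlt_op0_first b hb hwb hb0⟩),
            rfl, rfl⟩) (fun hL' => Lirr _ (Ltr hL hL'))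
        · by_cases hbv : b = s.vf a
          · exact Or.inr (Or.inl ⟨hb, ha, htr, hobj, hwb, hra, Or.inl hbv⟩)
          · rcases s.vlt_total b hb (s.vf a) hm hwb hw (hobj.trans ho.symm) hbv with h | h
            · exact Or.inr (Or.inl ⟨hb, ha, htr, hobj, hwb, hra, Or.inr h⟩)
            · exact absurd (Lsg _ _ ⟨a, b, Or.inr (Or.inr ⟨ha, hb, fun he => htr he.symm,
                hobj.symm, hra, hwb, h⟩), rfl, rfl⟩)
                (fun hL' => Lirr _ (Ltr hL hL'))
      · -- rw in the serialized schedule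
        have hv' : nVlt s L (nVf s L b) a := hv
        have hlt : nLt s L b a := by
          by_contra hn
          have hab : nLt s L a b := (nLt_total s L Ltot b hb a ha hba).resolve_left hn
          have haW : a ∈ nW s L b := ⟨ha, hwa, hobj.symm, hab⟩
          obtain ⟨hmem, hmax⟩ := nVf_spec s L Ltr Lirr Ltot ⟨a, haW⟩
          by_cases hav : a = nVf s L b
          · rw [← hav] at hv'
            exact nLt_irrefl s L a hv'.2.1
          · exact nLt_irrefl s L _
              (nLt_trans s L Ltr Lirr _ _ _ hv'.2.1 (hmax a haW hav))
        have hL : L (E.tr b) (E.tr a) :=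
          (nLt_cases s L hlt hb0).resolve_right (fun h => htr h.1)
        rcases s.vf_read b hb hrb with h0 | ⟨hm, hw, ho⟩
        · exact Or.inr (Or.inr ⟨hb, ha, htr, hobj, hrb, hwa,
            by rw [h0]; exact s.vlt_op0_first a ha hwa ha0⟩)
        · by_cases hav : s.vf b = a
          · exact absurd (Lsg _ _ ⟨a, b, Or.inr (Or.inl ⟨ha, hb, fun he => htr he.symm,
              hobj.symm, hwa, hrb, Or.inl hav.symm⟩), rfl, rfl⟩)
              (fun hL' => Lirr _ (Ltr hL hL'))
          · rcases s.vlt_total (s.vf b) hm a ha hw hwa (ho.trans hobj) hav with h | h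
            · exact Or.inr (Or.inr ⟨hb, ha, htr, hobj, hrb, hwa, h⟩)
            · exact absurd (Lsg _ _ ⟨a, b, Or.inr (Or.inl ⟨ha, hb, fun he => htr he.symm,
                hobj.symm, hwa, hrb, Or.inr h⟩), rfl, rfl⟩)
                (fun hL' => Lirr _ (Ltr hL hL'))

end WithL

private lemma cs_of_sg_acyclic [Finite Opn] {s : Schedule E T'} (hacy : s.sgAcyclic) :
    s.conflictSerializable := by
  classical
  set r : Tr → Tr → Prop := fun t u => t = u ∨ Relation.TransGen s.sgEdge t u with hr
  letI : IsPartialOrder Tr r :=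
    { refl := fun a => Or.inl rfl
      trans := by
        rintro a b c (rfl | h1) h2
        · exact h2
        · rcases h2 with rfl | h2
          · exact Or.inr h1
          · exact Or.inr (h1.trans h2)
      antisymm := by
        rintro a b (rfl | h1) h2
        · rfl
        · rcases h2 with rfl | h2
          · rfl
          · exact absurd (h1.trans h2) (hacy a) }
  obtain ⟨sle, hlin, hsub⟩ := extend_partialOrder r
  haveI := hlin
  set L : Tr → Tr → Prop := fun t u => sle t u ∧ t ≠ u with hLdef
  have Ltr : Transitive L := by
    rintro a b c ⟨h1, ne1⟩ ⟨h2, ne2⟩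
    refine ⟨Trans.trans h1 h2, ?_⟩
    rintro rfl
    exact ne1 (antisymm h1 h2)
  have Lirr : ∀ t, ¬ L t t := fun t h => h.2 rfl
  have Ltot : ∀ t u, t ≠ u → L t u ∨ L u t := by
    intro t u hne
    rcases total_of sle t u with h | h
    · exact Or.inl ⟨h, hne⟩
    · exact Or.inr ⟨h, hne.symm⟩
  have Lsg : ∀ t u, s.sgEdge t u → L t u := by
    rintro t u he
    have hne : t ≠ u := by
      obtain ⟨b, a, hdep, rfl, rfl⟩ := he
      exact (dep_elim hdep).2.2.1
    exact ⟨hsub t u (Or.inr (Relation.TransGen.single he)), hne⟩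
  exact build s L Ltr Lirr Ltot Lsg

end Stmt2Aux

/-- A multiversion schedule is conflict-serializable iff its
serialization graph is acyclic. -/
theorem stmt2 {Obj Tr Opn : Type} [Finite Tr] [Finite Opn]
    {E : Env Obj Tr Opn} {T' : Set Tr} (s : Schedule E T') :
    s.conflictSerializable ↔ s.sgAcyclic :=
  ⟨fun h => sg_acyclic_of_cs h, fun h => cs_of_sg_acyclic h⟩

end MVCC
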